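/- For every x ≥ 0, y ≥ 0 and every admissible control r, there exists a unique pair of continuous functions S, I : [0,∞) → ℝ satisfying the controlled SIR integral equations S(t) = x − ∫₀ᵗ (β S(s) I(s) + r(s) S(s)) ds and I(t) = y + ∫₀ᵗ (β S(s) I(s) − γ I(s)) ds for all t ≥ 0. Moreover 0 ≤ S(t) ≤ x + y and 0 ≤ I(t) ≤ x + y for all t ≥ 0, S is nonincreasing, and S, I, and the derivative İ are Lipschitz continuous on [0,∞). -/

import Mathlib

open MeasureTheory Set Filter Topology
open scoped Classical

noncomputable section

/-- An admissible vaccination-rate control: a measurable `r : ℝ → ℝ` with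
`0 ≤ r t ≤ 1` for a.e. `t ≥ 0`. -/
def Admissible (r : ℝ → ℝ) : Prop :=
  Measurable r ∧ ∀ᵐ t : ℝ ∂volume, 0 ≤ t → 0 ≤ r t ∧ r t ≤ 1

/-- `S, I` is a solution of the controlled SIR system with parameters `β, γ`,
control `r`, and initial data `x, y`:  they are continuous on `[0,∞)` and satisfy
`S t = x - ∫₀ᵗ (β S I + r S)` and `I t = y + ∫₀ᵗ (β S I - γ I)` for all `t ≥ 0`. -/
def IsSIRSol (β γ : ℝ) (r : ℝ → ℝ) (x y : ℝ) (S I : ℝ → ℝ) : Prop :=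
  ContinuousOn S (Ici 0) ∧ ContinuousOn I (Ici 0) ∧
  (∀ t : ℝ, 0 ≤ t → S t = x - ∫ s in (0:ℝ)..t, (β * S s * I s + r s * S s)) ∧
  (∀ t : ℝ, 0 ≤ t → I t = y + ∫ s in (0:ℝ)..t, (β * S s * I s - γ * I s))

/-- The susceptible component `S^r` of the solution of the controlled SIR system
(chosen via choice; it is unique on `[0,∞)`). -/
def sirS (β γ : ℝ) (r : ℝ → ℝ) (x y : ℝ) : ℝ → ℝ :=
  if h : ∃ p : (ℝ → ℝ) × (ℝ → ℝ), IsSIRSol β γ r x y p.1 p.2 then h.choose.1 else 0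

/-- The infected component `I^r` of the solution of the controlled SIR system. -/
def sirI (β γ : ℝ) (r : ℝ → ℝ) (x y : ℝ) : ℝ → ℝ :=
  if h : ∃ p : (ℝ → ℝ) × (ℝ → ℝ), IsSIRSol β γ r x y p.1 p.2 then h.choose.2 else 0

/-- The eradication time `u^r(x,y) = min { t ≥ 0 : I^r(t) = μ }`. -/
def eradTime (β γ μ : ℝ) (r : ℝ → ℝ) (x y : ℝ) : ℝ :=
  sInf {t : ℝ | 0 ≤ t ∧ sirI β γ r x y t = μ}

/-- The value function `u(x,y) = inf { u^r(x,y) : r admissible }`. -/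
def value (β γ μ : ℝ) (x y : ℝ) : ℝ :=
  sInf {T : ℝ | ∃ r : ℝ → ℝ, Admissible r ∧ T = eradTime β γ μ r x y}

/-- The triangle `T_{N,δ} = {(x,y) : x ≥ δ, y ≥ μ + δ, x + y ≤ N}`. -/
def Triangle (μ N δ : ℝ) : Set (ℝ × ℝ) :=
  {p : ℝ × ℝ | δ ≤ p.1 ∧ μ + δ ≤ p.2 ∧ p.1 + p.2 ≤ N}

/-- The partial derivative `∂ₓ u^r(z,w)` of the eradication time. -/
def uDx (β γ μ : ℝ) (r : ℝ → ℝ) (z w : ℝ) : ℝ :=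
  deriv (fun a => eradTime β γ μ r a w) z

/-- The partial derivative `∂_y u^r(z,w)` of the eradication time. -/
def uDy (β γ μ : ℝ) (r : ℝ → ℝ) (z w : ℝ) : ℝ :=
  deriv (fun b => eradTime β γ μ r z b) w

/-- The switching control `r_τ`: `0` on `[0,τ]` and `1` on `(τ,∞)`. -/
def switchCtrl (τ : ℝ) : ℝ → ℝ := fun t => if t ≤ τ then 0 else 1

lemma SIRaux.ii_of_bound {g : ℝ → ℝ} (hm : AEStronglyMeasurable g (volume : Measure ℝ))
    {B : ℝ} (h : ∀ s, |g s| ≤ B) (a b : ℝ) : IntervalIntegrable g volume a b :=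
  (intervalIntegrable_const (c := B)).mono_fun hm.restrict
    (ae_of_all _ fun s => by simpa [Real.norm_eq_abs] using (h s).trans (le_abs_self B))

lemma SIRaux.gronwall_int {C T : ℝ} (hC : 0 ≤ C) {φ : ℝ → ℝ} (hφ : Continuous φ)
    (hφ0 : ∀ t, 0 ≤ φ t)
    (h : ∀ t ∈ Icc (0:ℝ) T, φ t ≤ ∫ s in (0:ℝ)..t, C * φ s) :
    ∀ t ∈ Icc (0:ℝ) T, φ t = 0 := by
  set g : ℝ → ℝ := fun s => C * φ s with hgdef
  have hgc : Continuous g := continuous_const.mul hφ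
  set G : ℝ → ℝ := fun t => ∫ s in (0:ℝ)..t, g s with hGdef
  have hGd : ∀ t : ℝ, HasDerivAt G (g t) t := fun t =>
    intervalIntegral.integral_hasDerivAt_right (hgc.intervalIntegrable _ _)
      (hgc.stronglyMeasurableAtFilter _ _) hgc.continuousAt
  have hG0 : ∀ t ∈ Icc (0:ℝ) T, 0 ≤ G t := fun t ht =>
    intervalIntegral.integral_nonneg ht.1 fun u _ => mul_nonneg hC (hφ0 u)
  have key : ∀ t ∈ Icc (0:ℝ) T, ‖G t‖ ≤ gronwallBound 0 C 0 (t - 0) := by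
    apply norm_le_gronwallBound_of_norm_deriv_right_le
      (fun t _ => (hGd t).continuousAt.continuousWithinAt)
      (fun t _ => (hGd t).hasDerivWithinAt)
    · simp [hGdef]
    · intro s hs
      have h1 : φ s ≤ G s := h s (Ico_subset_Icc_self hs)
      have h2 : 0 ≤ G s := hG0 s (Ico_subset_Icc_self hs)
      have h3 : ‖g s‖ = C * φ s := abs_of_nonneg (mul_nonneg hC (hφ0 s))
      rw [h3, Real.norm_eq_abs, abs_of_nonneg h2]
      nlinarith [hφ0 s]
  intro t ht
  have h4 := key t ht
  rw [gronwallBound_ε0, Real.norm_eq_abs, abs_of_nonneg (hG0 t ht)] at h4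
  have hGt0 : G t ≤ 0 := by simpa using h4
  exact le_antisymm ((h t ht).trans hGt0) (hφ0 t)

lemma SIRaux.ii_mul {r f : ℝ → ℝ} (hrm : Measurable r)
    (hr1 : ∀ᵐ s : ℝ ∂volume, 0 ≤ s → |r s| ≤ 1) (hf : Continuous f) {t : ℝ} (ht : 0 ≤ t) :
    IntervalIntegrable (fun s => r s * f s) volume 0 t := by
  obtain ⟨R, hR⟩ := isCompact_Icc.exists_bound_of_continuousOn
    (f := f) (s := Icc (0:ℝ) t) hf.continuousOn
  rw [intervalIntegrable_iff, uIoc_of_le ht]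
  refine Integrable.mono' (integrable_const R)
    ((hrm.mul hf.measurable).aestronglyMeasurable.restrict) ?_
  filter_upwards [ae_restrict_of_ae hr1, ae_restrict_mem measurableSet_Ioc] with s h1 h2
  have h0 : (0:ℝ) ≤ s := le_of_lt h2.1
  have hfs : |f s| ≤ R := by simpa [Real.norm_eq_abs] using hR s ⟨h0, h2.2⟩
  calc ‖r s * f s‖ = |r s| * |f s| := abs_mul _ _
    _ ≤ 1 * R := mul_le_mul (h1 h0) hfs (abs_nonneg _) zero_le_one
    _ = R := one_mul R

lemma SIRaux.prod_diff_abs (a b c d : ℝ) : |a*b - c*d| ≤ |a| * |b - d| + |d| * |a - c| := by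
  have h : a*b - c*d = a*(b-d) + d*(a-c) := by ring
  rw [h]
  exact (abs_add_le _ _).trans (by rw [abs_mul, abs_mul])

lemma SIRaux.unique {β γ : ℝ} (hβ : 0 ≤ β) (hγ : 0 ≤ γ) {r : ℝ → ℝ} (hrm : Measurable r)
    (hr1 : ∀ᵐ s : ℝ ∂volume, 0 ≤ s → |r s| ≤ 1) {x y T : ℝ}
    {S1 I1 S2 I2 : ℝ → ℝ} (hS1 : Continuous S1) (hI1 : Continuous I1)
    (hS2 : Continuous S2) (hI2 : Continuous I2)
    (he1 : ∀ t ∈ Icc (0:ℝ) T, S1 t = x - ∫ s in (0:ℝ)..t, (β * S1 s * I1 s + r s * S1 s))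
    (hf1 : ∀ t ∈ Icc (0:ℝ) T, I1 t = y + ∫ s in (0:ℝ)..t, (β * S1 s * I1 s - γ * I1 s))
    (he2 : ∀ t ∈ Icc (0:ℝ) T, S2 t = x - ∫ s in (0:ℝ)..t, (β * S2 s * I2 s + r s * S2 s))
    (hf2 : ∀ t ∈ Icc (0:ℝ) T, I2 t = y + ∫ s in (0:ℝ)..t, (β * S2 s * I2 s - γ * I2 s)) :
    ∀ t ∈ Icc (0:ℝ) T, S1 t = S2 t ∧ I1 t = I2 t := by
  obtain ⟨R0, hR0⟩ := isCompact_Icc.exists_bound_of_continuousOn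
    (f := fun s => |S1 s| + |I2 s|) (s := Icc (0:ℝ) T)
    ((hS1.abs.add hI2.abs).continuousOn)
  set R : ℝ := max R0 0 with hRdef
  have hRnn : 0 ≤ R := le_max_right _ _
  have hRS1 : ∀ s ∈ Icc (0:ℝ) T, |S1 s| ≤ R := by
    intro s hs
    have := hR0 s hs
    rw [Real.norm_eq_abs, abs_of_nonneg (by positivity)] at this
    have := le_trans (le_add_of_nonneg_right (abs_nonneg (I2 s))) this
    exact this.trans (le_max_left _ _)
  have hRI2 : ∀ s ∈ Icc (0:ℝ) T, |I2 s| ≤ R := by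
    intro s hs
    have := hR0 s hs
    rw [Real.norm_eq_abs, abs_of_nonneg (by positivity)] at this
    have := le_trans (le_add_of_nonneg_left (abs_nonneg (S1 s))) this
    exact this.trans (le_max_left _ _)
  set φ : ℝ → ℝ := fun s => |S1 s - S2 s| + |I1 s - I2 s| with hφdef
  have hφc : Continuous φ := (hS1.sub hS2).abs.add (hI1.sub hI2).abs
  have hφ0 : ∀ s, 0 ≤ φ s := fun s => by positivity
  set C : ℝ := 2 * β * R + 1 + γ with hCdef
  have hCnn : 0 ≤ C := by positivity
  have key : ∀ t ∈ Icc (0:ℝ) T, φ t ≤ ∫ s in (0:ℝ)..t, C * φ s := by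
    intro t ht
    have ht0 : (0:ℝ) ≤ t := ht.1
    set A1 : ℝ → ℝ := fun s => β * S1 s * I1 s + r s * S1 s with hA1
    set A2 : ℝ → ℝ := fun s => β * S2 s * I2 s + r s * S2 s with hA2
    set B1 : ℝ → ℝ := fun s => β * S1 s * I1 s - γ * I1 s with hB1
    set B2 : ℝ → ℝ := fun s => β * S2 s * I2 s - γ * I2 s with hB2
    have iA1 : IntervalIntegrable A1 volume 0 t :=
      (((continuous_const.mul hS1).mul hI1).intervalIntegrable _ _).add
        (SIRaux.ii_mul hrm hr1 hS1 ht0)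
    have iA2 : IntervalIntegrable A2 volume 0 t :=
      (((continuous_const.mul hS2).mul hI2).intervalIntegrable _ _).add
        (SIRaux.ii_mul hrm hr1 hS2 ht0)
    have iB1 : IntervalIntegrable B1 volume 0 t :=
      (((continuous_const.mul hS1).mul hI1).sub (continuous_const.mul hI1)).intervalIntegrable _ _
    have iB2 : IntervalIntegrable B2 volume 0 t :=
      (((continuous_const.mul hS2).mul hI2).sub (continuous_const.mul hI2)).intervalIntegrable _ _
    have hSd : S1 t - S2 t = -∫ s in (0:ℝ)..t, (A1 s - A2 s) := by
      rw [intervalIntegral.integral_sub iA1 iA2, he1 t ht, he2 t ht]; ring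
    have hId : I1 t - I2 t = ∫ s in (0:ℝ)..t, (B1 s - B2 s) := by
      rw [intervalIntegral.integral_sub iB1 iB2, hf1 t ht, hf2 t ht]; ring
    have habs1 : |S1 t - S2 t| ≤ ∫ s in (0:ℝ)..t, |A1 s - A2 s| := by
      rw [hSd, abs_neg]
      simpa [Real.norm_eq_abs] using
        intervalIntegral.norm_integral_le_integral_norm (f := fun s => A1 s - A2 s)
          (a := 0) (b := t) ht0
    have habs2 : |I1 t - I2 t| ≤ ∫ s in (0:ℝ)..t, |B1 s - B2 s| := by
      rw [hId]
      simpa [Real.norm_eq_abs] using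
        intervalIntegral.norm_integral_le_integral_norm (f := fun s => B1 s - B2 s)
          (a := 0) (b := t) ht0
    have hsum : φ t ≤ ∫ s in (0:ℝ)..t, (|A1 s - A2 s| + |B1 s - B2 s|) := by
      rw [intervalIntegral.integral_add (iA1.sub iA2).abs (iB1.sub iB2).abs]
      exact add_le_add habs1 habs2
    refine hsum.trans ?_
    refine intervalIntegral.integral_mono_ae_restrict ht0
      ((iA1.sub iA2).abs.add (iB1.sub iB2).abs)
      ((continuous_const.mul hφc).intervalIntegrable _ _) ?_
    filter_upwards [ae_restrict_of_ae hr1, ae_restrict_mem measurableSet_Icc] with s hs1 hs2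
    have hs0 : (0:ℝ) ≤ s := hs2.1
    have hsT : s ∈ Icc (0:ℝ) T := ⟨hs0, hs2.2.trans ht.2⟩
    have hrs : |r s| ≤ 1 := hs1 hs0
    have hb1 : |S1 s| ≤ R := hRS1 s hsT
    have hb2 : |I2 s| ≤ R := hRI2 s hsT
    have hprod : |S1 s * I1 s - S2 s * I2 s| ≤ |S1 s| * |I1 s - I2 s| + |I2 s| * |S1 s - S2 s| :=
      SIRaux.prod_diff_abs _ _ _ _
    have hA : |A1 s - A2 s| ≤ β * (|S1 s| * |I1 s - I2 s| + |I2 s| * |S1 s - S2 s|)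
        + |S1 s - S2 s| := by
      have e : A1 s - A2 s = β * (S1 s * I1 s - S2 s * I2 s) + r s * (S1 s - S2 s) := by
        simp only [hA1, hA2]; ring
      rw [e]
      refine (abs_add_le _ _).trans (add_le_add ?_ ?_)
      · rw [abs_mul, abs_of_nonneg hβ]
        exact mul_le_mul_of_nonneg_left hprod hβ
      · rw [abs_mul]
        exact mul_le_mul_of_nonneg_right hrs (abs_nonneg _) |>.trans (by rw [one_mul])
    have hB : |B1 s - B2 s| ≤ β * (|S1 s| * |I1 s - I2 s| + |I2 s| * |S1 s - S2 s|)
        + γ * |I1 s - I2 s| := by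
      have e : B1 s - B2 s = β * (S1 s * I1 s - S2 s * I2 s) - γ * (I1 s - I2 s) := by
        simp only [hB1, hB2]; ring
      rw [e]
      refine (abs_sub _ _).trans (add_le_add ?_ ?_)
      · rw [abs_mul, abs_of_nonneg hβ]
        exact mul_le_mul_of_nonneg_left hprod hβ
      · rw [abs_mul, abs_of_nonneg hγ]
    have h1 : |S1 s - S2 s| ≤ φ s := le_add_of_nonneg_right (abs_nonneg _)
    have h2 : |I1 s - I2 s| ≤ φ s := le_add_of_nonneg_left (abs_nonneg _)
    have hφs : 0 ≤ φ s := hφ0 s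
    calc |A1 s - A2 s| + |B1 s - B2 s|
        ≤ (β * (|S1 s| * |I1 s - I2 s| + |I2 s| * |S1 s - S2 s|) + |S1 s - S2 s|)
          + (β * (|S1 s| * |I1 s - I2 s| + |I2 s| * |S1 s - S2 s|) + γ * |I1 s - I2 s|) :=
          add_le_add hA hB
      _ ≤ C * φ s := by
          have hφeq : φ s = |S1 s - S2 s| + |I1 s - I2 s| := rfl
          have m1 : |S1 s| * |I1 s - I2 s| ≤ R * |I1 s - I2 s| :=
            mul_le_mul_of_nonneg_right hb1 (abs_nonneg _)
          have m2 : |I2 s| * |S1 s - S2 s| ≤ R * |S1 s - S2 s| :=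
            mul_le_mul_of_nonneg_right hb2 (abs_nonneg _)
          have m3 : β * (|S1 s| * |I1 s - I2 s| + |I2 s| * |S1 s - S2 s|)
              ≤ β * (R * |I1 s - I2 s| + R * |S1 s - S2 s|) :=
            mul_le_mul_of_nonneg_left (add_le_add m1 m2) hβ
          rw [hφeq, hCdef]
          nlinarith [mul_nonneg hγ (abs_nonneg (S1 s - S2 s)),
            abs_nonneg (I1 s - I2 s), m3]
  intro t ht
  have hz := SIRaux.gronwall_int hCnn hφc hφ0 key t ht
  constructor
  · have : |S1 t - S2 t| = 0 := by
      have := abs_nonneg (S1 t - S2 t); have := abs_nonneg (I1 t - I2 t)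
      simp only [hφdef] at hz; linarith
    linarith [abs_eq_zero.mp this, sub_eq_zero.mp (abs_eq_zero.mp this)]
  · have : |I1 t - I2 t| = 0 := by
      have := abs_nonneg (S1 t - S2 t); have := abs_nonneg (I1 t - I2 t)
      simp only [hφdef] at hz; linarith
    linarith [sub_eq_zero.mp (abs_eq_zero.mp this)]

namespace SIRaux

lemma ii_of_bound' {E : Type*} [NormedAddCommGroup E] {g : ℝ → E}
    (hm : AEStronglyMeasurable g (volume : Measure ℝ)) {B : ℝ} (h : ∀ s, ‖g s‖ ≤ B) (a b : ℝ) :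
    IntervalIntegrable g volume a b :=
  (intervalIntegrable_const (c := B)).mono_fun hm.restrict
    (ae_of_all _ fun s => by simpa [Real.norm_eq_abs] using (h s).trans (le_abs_self B))

lemma continuous_cl (M : ℝ) : Continuous (fun v : ℝ => max 0 (min v M)) :=
  continuous_const.max (continuous_id.min continuous_const)

lemma cl_nonneg (M v : ℝ) : 0 ≤ max 0 (min v M) := le_max_left _ _

lemma cl_le {M : ℝ} (hM : 0 ≤ M) (v : ℝ) : max 0 (min v M) ≤ M := max_le hM (min_le_right _ _)

lemma cl_abs_le {M : ℝ} (hM : 0 ≤ M) (v : ℝ) : |max 0 (min v M)| ≤ M := by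
  rw [abs_of_nonneg (cl_nonneg M v)]; exact cl_le hM v

lemma cl_eq {M v : ℝ} (h0 : 0 ≤ v) (h1 : v ≤ M) : max 0 (min v M) = v := by
  rw [min_eq_left h1, max_eq_right h0]

lemma cl_of_neg {M v : ℝ} (h : v < 0) : max 0 (min v M) = 0 :=
  max_eq_left ((min_le_left _ _).trans h.le)

lemma cl_lip (M v w : ℝ) : |max 0 (min v M) - max 0 (min w M)| ≤ |v - w| := by
  have h1 : |max (min v M) 0 - max (min w M) 0| ≤ |min v M - min w M| :=
    abs_max_sub_max_le_abs _ _ _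
  have h2 : |min v M - min w M| ≤ max |v - w| |M - M| := abs_min_sub_min_le_max _ _ _ _
  rw [max_comm (0:ℝ) (min v M), max_comm (0:ℝ) (min w M)]
  simpa using h1.trans h2

/-- The truncated SIR vector field. -/
def fld (β γ M : ℝ) (ρ : ℝ → ℝ) (s : ℝ) (p : ℝ × ℝ) : ℝ × ℝ :=
  (-(β * max 0 (min p.1 M) * max 0 (min p.2 M) + ρ s * max 0 (min p.1 M)),
    β * max 0 (min p.1 M) * max 0 (min p.2 M) - γ * max 0 (min p.2 M))

lemma fld_bound {β γ M : ℝ} (hβ : 0 ≤ β) (hγ : 0 ≤ γ) (hM : 0 ≤ M) {ρ : ℝ → ℝ}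
    (hρ : ∀ t, 0 ≤ ρ t ∧ ρ t ≤ 1) (s : ℝ) (p : ℝ × ℝ) :
    ‖fld β γ M ρ s p‖ ≤ β * M * M + M + γ * M := by
  have hρ0 := (hρ s).1
  have hρ1 := (hρ s).2
  have c1 := cl_abs_le hM p.1
  have c2 := cl_abs_le hM p.2
  have n1 := cl_nonneg M p.1
  have n2 := cl_nonneg M p.2
  have hρs : |ρ s| ≤ 1 := by rw [abs_of_nonneg hρ0]; exact hρ1
  have p1 : |max 0 (min p.1 M)| * |max 0 (min p.2 M)| ≤ M * M :=
    mul_le_mul c1 c2 (abs_nonneg _) hM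
  rw [Prod.norm_def]
  apply max_le
  · show |(fld β γ M ρ s p).1| ≤ _
    simp only [fld]
    rw [abs_neg]
    refine (abs_add_le _ _).trans ?_
    rw [abs_mul, abs_mul, abs_mul, abs_of_nonneg hβ, mul_assoc]
    nlinarith [abs_nonneg (ρ s), abs_nonneg (max 0 (min p.1 M)),
      mul_le_mul hρs c1 (abs_nonneg _) zero_le_one]
  · show |(fld β γ M ρ s p).2| ≤ _
    simp only [fld]
    refine (abs_sub _ _).trans ?_
    rw [abs_mul, abs_mul, abs_mul, abs_of_nonneg hβ, abs_of_nonneg hγ, mul_assoc]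
    nlinarith [mul_le_mul_of_nonneg_left c2 hγ]

lemma fld_lip {β γ M : ℝ} (hβ : 0 ≤ β) (hγ : 0 ≤ γ) (hM : 0 ≤ M) {ρ : ℝ → ℝ}
    (hρ : ∀ t, 0 ≤ ρ t ∧ ρ t ≤ 1) (s : ℝ) (p q : ℝ × ℝ) :
    ‖fld β γ M ρ s p - fld β γ M ρ s q‖ ≤ (2 * β * M + 1 + γ) * ‖p - q‖ := by
  set a1 := max 0 (min p.1 M)
  set a2 := max 0 (min p.2 M)
  set b1 := max 0 (min q.1 M)
  set b2 := max 0 (min q.2 M)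
  have hD1 : |p.1 - q.1| ≤ ‖p - q‖ := by
    simpa [Real.norm_eq_abs] using norm_fst_le (p - q)
  have hD2 : |p.2 - q.2| ≤ ‖p - q‖ := by
    simpa [Real.norm_eq_abs] using norm_snd_le (p - q)
  have l1 : |a1 - b1| ≤ ‖p - q‖ := (cl_lip M p.1 q.1).trans hD1
  have l2 : |a2 - b2| ≤ ‖p - q‖ := (cl_lip M p.2 q.2).trans hD2
  have c1 : |a1| ≤ M := cl_abs_le hM p.1
  have c2 : |b2| ≤ M := cl_abs_le hM q.2
  have hρs : |ρ s| ≤ 1 := by rw [abs_of_nonneg (hρ s).1]; exact (hρ s).2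
  have hprod : |a1 * a2 - b1 * b2| ≤ |a1| * |a2 - b2| + |b2| * |a1 - b1| := by
    have h : a1 * a2 - b1 * b2 = a1 * (a2 - b2) + b2 * (a1 - b1) := by ring
    rw [h]
    exact (abs_add_le _ _).trans (by rw [abs_mul, abs_mul])
  have hDnn : (0:ℝ) ≤ ‖p - q‖ := norm_nonneg _
  rw [Prod.norm_def]
  apply max_le
  · have e : (fld β γ M ρ s p - fld β γ M ρ s q).1
        = -(β * (a1 * a2 - b1 * b2) + ρ s * (a1 - b1)) := by
      simp only [fld, Prod.fst_sub]; ring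
    rw [e, Real.norm_eq_abs, abs_neg]
    refine (abs_add_le _ _).trans ?_
    rw [abs_mul, abs_mul, abs_of_nonneg hβ]
    nlinarith [abs_nonneg (a1 - b1), abs_nonneg (a2 - b2), abs_nonneg (a1), abs_nonneg (b2),
      abs_nonneg (ρ s), mul_le_mul c1 l2 (abs_nonneg _) hM, mul_le_mul c2 l1 (abs_nonneg _) hM,
      mul_le_mul hρs l1 (abs_nonneg _) zero_le_one]
  · have e : (fld β γ M ρ s p - fld β γ M ρ s q).2
        = β * (a1 * a2 - b1 * b2) - γ * (a2 - b2) := by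
      simp only [fld, Prod.snd_sub]; ring
    rw [e, Real.norm_eq_abs]
    refine (abs_sub _ _).trans ?_
    rw [abs_mul, abs_mul, abs_of_nonneg hβ, abs_of_nonneg hγ]
    nlinarith [abs_nonneg (a1 - b1), abs_nonneg (a2 - b2),
      mul_le_mul c1 l2 (abs_nonneg _) hM, mul_le_mul c2 l1 (abs_nonneg _) hM,
      mul_le_mul_of_nonneg_left l2 hγ]

lemma fld_meas {β γ M : ℝ} {ρ : ℝ → ℝ} (hρm : Measurable ρ) {u : ℝ → ℝ × ℝ}
    (hu : Continuous u) : Measurable fun s => fld β γ M ρ s (u s) := by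
  have h1 : Continuous fun s => max 0 (min (u s).1 M) :=
    (continuous_cl M).comp (continuous_fst.comp hu)
  have h2 : Continuous fun s => max 0 (min (u s).2 M) :=
    (continuous_cl M).comp (continuous_snd.comp hu)
  exact Measurable.prodMk
    ((((measurable_const.mul h1.measurable).mul h2.measurable).add
      (hρm.mul h1.measurable)).neg)
    (((measurable_const.mul h1.measurable).mul h2.measurable).sub
      (measurable_const.mul h2.measurable))


lemma exists_sol (β γ : ℝ) (hβ : 0 ≤ β) (hγ : 0 ≤ γ)
    (ρ : ℝ → ℝ) (hρm : Measurable ρ) (hρ : ∀ t, 0 ≤ ρ t ∧ ρ t ≤ 1)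
    (x y : ℝ) (hx : 0 ≤ x) (hy : 0 ≤ y) (T : ℝ) (hT : 0 ≤ T) :
    ∃ S I : ℝ → ℝ, Continuous S ∧ Continuous I ∧
      (∀ t ∈ Icc (0:ℝ) T, S t = x - ∫ s in (0:ℝ)..t, (β * S s * I s + ρ s * S s)) ∧
      (∀ t ∈ Icc (0:ℝ) T, I t = y + ∫ s in (0:ℝ)..t, (β * S s * I s - γ * I s)) ∧
      (∀ t ∈ Icc (0:ℝ) T, 0 ≤ S t ∧ S t ≤ x + y ∧ 0 ≤ I t ∧ I t ≤ x + y) ∧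
      (∀ t1 ∈ Icc (0:ℝ) T, ∀ t2 ∈ Icc (0:ℝ) T, t1 ≤ t2 → S t2 ≤ S t1) := by
  set M := x + y with hMdef
  have hM : 0 ≤ M := by positivity
  set F := fld β γ M ρ with hFdef
  set B := β * M * M + M + γ * M with hBdef
  have hBnn : 0 ≤ B := by positivity
  set L := 2 * β * M + 1 + γ with hLdef
  have hLnn : 0 ≤ L := by positivity
  have hFb : ∀ s p, ‖F s p‖ ≤ B := fun s p => fld_bound hβ hγ hM hρ s p
  have hFl : ∀ s p q, ‖F s p - F s q‖ ≤ L * ‖p - q‖ := fun s p q => fld_lip hβ hγ hM hρ s p q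
  set τ : ℝ → ℝ := fun t => min (max t 0) T with hτdef
  have hτc : Continuous τ := (continuous_id.max continuous_const).min continuous_const
  have hτ0 : ∀ t, 0 ≤ τ t := fun t => le_min (le_max_right _ _) hT
  have hτT : ∀ t, τ t ≤ T := fun t => min_le_right _ _
  have hτid : ∀ t ∈ Icc (0:ℝ) T, τ t = t := by
    intro t ht
    simp only [hτdef]
    rw [max_eq_left ht.1, min_eq_left ht.2]
  have hmeas : ∀ u : BoundedContinuousFunction ℝ (ℝ × ℝ),
      AEStronglyMeasurable (fun s => F s (u s)) (volume : Measure ℝ) :=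
    fun u => (fld_meas hρm u.continuous).aestronglyMeasurable
  have hii : ∀ (u : BoundedContinuousFunction ℝ (ℝ × ℝ)) (a b : ℝ),
      IntervalIntegrable (fun s => F s (u s)) volume a b :=
    fun u a b => ii_of_bound' (hmeas u) (fun s => hFb s (u s)) a b
  set pt : ℝ × ℝ := (x, y) with hptdef
  have hcontΦ : ∀ u : BoundedContinuousFunction ℝ (ℝ × ℝ),
      Continuous fun t => pt + ∫ s in (0:ℝ)..(τ t), F s (u s) :=
    fun u => continuous_const.add ((intervalIntegral.continuous_primitive (hii u) 0).comp hτc)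
  have hbdΦ : ∀ u : BoundedContinuousFunction ℝ (ℝ × ℝ), ∀ t : ℝ,
      ‖pt + ∫ s in (0:ℝ)..(τ t), F s (u s)‖ ≤ ‖pt‖ + B * T := by
    intro u t
    refine (norm_add_le _ _).trans (add_le_add (le_refl _) ?_)
    refine (intervalIntegral.norm_integral_le_of_norm_le_const
      (fun s _ => hFb s (u s))).trans ?_
    have h1 : |τ t - 0| ≤ T := by rw [sub_zero, abs_of_nonneg (hτ0 t)]; exact hτT t
    exact mul_le_mul_of_nonneg_left h1 hBnn
  set Φ : BoundedContinuousFunction ℝ (ℝ × ℝ) → BoundedContinuousFunction ℝ (ℝ × ℝ) :=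
    fun u => BoundedContinuousFunction.ofNormedAddCommGroup _ (hcontΦ u) (‖pt‖ + B * T) (hbdΦ u)
    with hΦdef
  have hΦapp : ∀ u t, Φ u t = pt + ∫ s in (0:ℝ)..(τ t), F s (u s) := fun u t => rfl
  have key : ∀ n : ℕ, ∀ u v : BoundedContinuousFunction ℝ (ℝ × ℝ), ∀ t : ℝ,
      ‖Φ^[n] u t - Φ^[n] v t‖ ≤ L ^ n * (τ t) ^ n / n.factorial * dist u v := by
    intro n
    induction n with
    | zero =>
      intro u v t
      simp only [Function.iterate_zero_apply, pow_zero, Nat.factorial_zero, Nat.cast_one,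
        div_one, one_mul]
      rw [← dist_eq_norm]
      exact BoundedContinuousFunction.dist_coe_le_dist t
    | succ n ih =>
      intro u v t
      rw [Function.iterate_succ_apply', Function.iterate_succ_apply']
      set w := Φ^[n] u with hwdef
      set w' := Φ^[n] v with hw'def
      have e : Φ w t - Φ w' t = ∫ s in (0:ℝ)..(τ t), (F s (w s) - F s (w' s)) := by
        rw [hΦapp w t, hΦapp w' t,
          intervalIntegral.integral_sub (hii w 0 (τ t)) (hii w' 0 (τ t))]
        abel
      rw [e]
      have h1 : ‖∫ s in (0:ℝ)..(τ t), (F s (w s) - F s (w' s))‖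
          ≤ ∫ s in (0:ℝ)..(τ t), ‖F s (w s) - F s (w' s)‖ :=
        intervalIntegral.norm_integral_le_integral_norm (hτ0 t)
      have h2 : (∫ s in (0:ℝ)..(τ t), ‖F s (w s) - F s (w' s)‖)
          ≤ ∫ s in (0:ℝ)..(τ t), (L ^ (n+1) * dist u v / n.factorial) * s ^ n := by
        refine intervalIntegral.integral_mono_on (hτ0 t)
          (((hii w 0 (τ t)).sub (hii w' 0 (τ t))).norm)
          ((continuous_const.mul (continuous_pow n)).intervalIntegrable _ _) ?_
        intro s hs
        have hsT : s ∈ Icc (0:ℝ) T := ⟨hs.1, hs.2.trans (hτT t)⟩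
        have hτs : τ s = s := hτid s hsT
        have ihs := ih u v s
        rw [hτs] at ihs
        calc ‖F s (w s) - F s (w' s)‖ ≤ L * ‖w s - w' s‖ := hFl s _ _
          _ ≤ L * (L ^ n * s ^ n / n.factorial * dist u v) :=
              mul_le_mul_of_nonneg_left ihs hLnn
          _ = (L ^ (n+1) * dist u v / n.factorial) * s ^ n := by ring
      refine (h1.trans h2).trans ?_
      rw [intervalIntegral.integral_const_mul, integral_pow]
      have hz : (0:ℝ) ^ (n+1) = 0 := zero_pow (Nat.succ_ne_zero n)
      rw [hz, sub_zero]
      apply le_of_eq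
      have hfact : ((n+1).factorial : ℝ) = (n+1) * n.factorial := by
        rw [Nat.factorial_succ]; push_cast; ring
      rw [hfact]
      have hnf : (n.factorial : ℝ) ≠ 0 := Nat.cast_ne_zero.2 n.factorial_ne_zero
      have hn1 : ((n:ℝ) + 1) ≠ 0 := by positivity
      field_simp
  have keyD : ∀ n : ℕ, ∀ u v : BoundedContinuousFunction ℝ (ℝ × ℝ),
      dist (Φ^[n] u) (Φ^[n] v) ≤ L ^ n * T ^ n / n.factorial * dist u v := by
    intro n u v
    have hnn : (0:ℝ) ≤ L ^ n * T ^ n / n.factorial * dist u v := by positivity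
    rw [BoundedContinuousFunction.dist_le hnn]
    intro t
    rw [dist_eq_norm]
    refine (key n u v t).trans ?_
    have h3 : (τ t) ^ n ≤ T ^ n := pow_le_pow_left₀ (hτ0 t) (hτT t) n
    gcongr L ^ n * ?_ / (n.factorial : ℝ) * dist u v
  obtain ⟨n, hn⟩ : ∃ n : ℕ, L ^ n * T ^ n / n.factorial < 1 := by
    have h2 := (FloorSemiring.tendsto_pow_div_factorial_atTop (L * T)).eventually_lt_const
      (by norm_num : (0:ℝ) < 1)
    obtain ⟨n, hn⟩ := h2.exists
    exact ⟨n, by rwa [mul_pow] at hn⟩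
  set K : ℝ := L ^ n * T ^ n / n.factorial with hKdef
  have hKnn : 0 ≤ K := by positivity
  have hlip : LipschitzWith (Real.toNNReal K) (Φ^[n]) := by
    apply LipschitzWith.of_dist_le_mul
    intro u v
    rw [Real.coe_toNNReal K hKnn]
    exact keyD n u v
  have hcontr : ContractingWith (Real.toNNReal K) (Φ^[n]) := by
    refine ⟨?_, hlip⟩
    rw [← NNReal.coe_lt_coe, Real.coe_toNNReal K hKnn, NNReal.coe_one]
    exact hn
  have hfixP : Function.IsFixedPt Φ (hcontr.fixedPoint (Φ^[n])) :=
    hcontr.isFixedPt_fixedPoint_iterate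
  set U := hcontr.fixedPoint (Φ^[n]) with hUdef
  have hUeq : ∀ t, U t = pt + ∫ s in (0:ℝ)..(τ t), F s (U s) := by
    intro t
    conv_lhs => rw [← hfixP]
    exact hΦapp U t
  set Sc : ℝ → ℝ := fun t => (U t).1 with hScdef
  set Ic : ℝ → ℝ := fun t => (U t).2 with hIcdef
  have hScc : Continuous Sc := continuous_fst.comp U.continuous
  have hIcc : Continuous Ic := continuous_snd.comp U.continuous
  set g1 : ℝ → ℝ := fun s => β * max 0 (min (Sc s) M) * max 0 (min (Ic s) M)
    + ρ s * max 0 (min (Sc s) M) with hg1def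
  set g2 : ℝ → ℝ := fun s => β * max 0 (min (Sc s) M) * max 0 (min (Ic s) M)
    - γ * max 0 (min (Ic s) M) with hg2def
  have hg1F : ∀ s, (F s (U s)).1 = -(g1 s) := by
    intro s
    simp only [hg1def, hFdef, fld, hScdef, hIcdef]
  have hg2F : ∀ s, (F s (U s)).2 = g2 s := fun s => rfl
  have hiig1 : ∀ a b : ℝ, IntervalIntegrable g1 volume a b := by
    intro a b
    have h := ii_of_bound' (E := ℝ) (g := fun s => (F s (U s)).1)
      ((fld_meas hρm U.continuous).fst.aestronglyMeasurable)
      (B := B) (fun s => (norm_fst_le (F s (U s))).trans (hFb s (U s))) a b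
    have h2 := h.neg
    have h4 : (-(fun s : ℝ => (F s (U s)).1)) = g1 := by
      funext s
      show -(F s (U s)).1 = g1 s
      rw [hg1F s, neg_neg]
    rwa [h4] at h2
  have hiig2 : ∀ a b : ℝ, IntervalIntegrable g2 volume a b := by
    intro a b
    have h := ii_of_bound' (E := ℝ) (g := fun s => (F s (U s)).2)
      ((fld_meas hρm U.continuous).snd.aestronglyMeasurable)
      (B := B) (fun s => (norm_snd_le (F s (U s))).trans (hFb s (U s))) a b
    have h3 : (fun s : ℝ => (F s (U s)).2) = g2 := funext hg2F
    rwa [h3] at h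
  have hSeq : ∀ t, Sc t = x - ∫ s in (0:ℝ)..(τ t), g1 s := by
    intro t
    have h := congrArg Prod.fst (hUeq t)
    rw [Prod.fst_add] at h
    have hfst : (∫ s in (0:ℝ)..(τ t), F s (U s)).1
        = ∫ s in (0:ℝ)..(τ t), (F s (U s)).1 := by
      have h5 := (ContinuousLinearMap.fst ℝ ℝ ℝ).intervalIntegral_comp_comm (hii U 0 (τ t))
      simpa using h5.symm
    rw [hfst] at h
    have h6 : (∫ s in (0:ℝ)..(τ t), (F s (U s)).1) = -∫ s in (0:ℝ)..(τ t), g1 s := by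
      rw [← intervalIntegral.integral_neg]
      congr 1
    rw [h6] at h
    simpa [sub_eq_add_neg] using h
  have hIeq : ∀ t, Ic t = y + ∫ s in (0:ℝ)..(τ t), g2 s := by
    intro t
    have h := congrArg Prod.snd (hUeq t)
    rw [Prod.snd_add] at h
    have hsnd : (∫ s in (0:ℝ)..(τ t), F s (U s)).2
        = ∫ s in (0:ℝ)..(τ t), (F s (U s)).2 := by
      have h5 := (ContinuousLinearMap.snd ℝ ℝ ℝ).intervalIntegral_comp_comm (hii U 0 (τ t))
      simpa using h5.symm
    rw [hsnd] at h
    have h6 : (∫ s in (0:ℝ)..(τ t), (F s (U s)).2) = ∫ s in (0:ℝ)..(τ t), g2 s := by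
      congr 1
    rw [h6] at h
    exact h
  have hτzero : τ 0 = 0 := hτid 0 (left_mem_Icc.mpr hT)
  have hS0 : Sc 0 = x := by
    rw [hSeq 0, hτzero, intervalIntegral.integral_same, sub_zero]
  have hI0 : Ic 0 = y := by
    rw [hIeq 0, hτzero, intervalIntegral.integral_same, add_zero]
  have hSnn : ∀ t ∈ Icc (0:ℝ) T, 0 ≤ Sc t := by
    intro t ht
    by_contra hneg
    push_neg at hneg
    set A : Set ℝ := Icc 0 t ∩ Sc ⁻¹' (Ici 0) with hAdef
    have h0A : (0:ℝ) ∈ A := ⟨left_mem_Icc.mpr ht.1, by simp [mem_preimage, hS0, hx]⟩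
    have hclosed : IsClosed A := isClosed_Icc.inter (isClosed_Ici.preimage hScc)
    have hbdd : BddAbove A := bddAbove_Icc.mono inter_subset_left
    set t0 := sSup A with ht0def
    have ht0A : t0 ∈ A := hclosed.csSup_mem ⟨0, h0A⟩ hbdd
    have ht0t : t0 ≤ t := ht0A.1.2
    have ht00 : 0 ≤ t0 := ht0A.1.1
    have hSct0 : 0 ≤ Sc t0 := ht0A.2
    have hlt : ∀ s, t0 < s → s ≤ t → Sc s < 0 := by
      intro s hs1 hs2
      by_contra hge
      push_neg at hge
      have hsA : s ∈ A := ⟨⟨ht00.trans hs1.le, hs2⟩, hge⟩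
      exact absurd (le_csSup hbdd hsA) (not_le.mpr hs1)
    have ht0t' : t0 < t := by
      rcases lt_or_eq_of_le ht0t with h | h
      · exact h
      · rw [h] at hSct0; linarith
    have hint : ∫ s in t0..t, g1 s = 0 := by
      rw [intervalIntegral.integral_congr_ae (g := fun _ => (0:ℝ))
        (ae_of_all _ ?_), intervalIntegral.integral_zero]
      intro s hs
      rw [uIoc_of_le ht0t'.le] at hs
      have hz : Sc s < 0 := hlt s hs.1 hs.2
      simp [hg1def, cl_of_neg hz]
    have hdiff : Sc t - Sc t0 = -∫ s in t0..t, g1 s := by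
      rw [hSeq t, hSeq t0, hτid t ht, hτid t0 ⟨ht00, ht0t.trans ht.2⟩,
        ← intervalIntegral.integral_add_adjacent_intervals (hiig1 0 t0) (hiig1 t0 t)]
      ring
    rw [hint, neg_zero] at hdiff
    linarith
  have hInn : ∀ t ∈ Icc (0:ℝ) T, 0 ≤ Ic t := by
    intro t ht
    by_contra hneg
    push_neg at hneg
    set A : Set ℝ := Icc 0 t ∩ Ic ⁻¹' (Ici 0) with hAdef
    have h0A : (0:ℝ) ∈ A := ⟨left_mem_Icc.mpr ht.1, by simp [mem_preimage, hI0, hy]⟩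
    have hclosed : IsClosed A := isClosed_Icc.inter (isClosed_Ici.preimage hIcc)
    have hbdd : BddAbove A := bddAbove_Icc.mono inter_subset_left
    set t0 := sSup A with ht0def
    have ht0A : t0 ∈ A := hclosed.csSup_mem ⟨0, h0A⟩ hbdd
    have ht0t : t0 ≤ t := ht0A.1.2
    have ht00 : 0 ≤ t0 := ht0A.1.1
    have hSct0 : 0 ≤ Ic t0 := ht0A.2
    have hlt : ∀ s, t0 < s → s ≤ t → Ic s < 0 := by
      intro s hs1 hs2
      by_contra hge
      push_neg at hge
      have hsA : s ∈ A := ⟨⟨ht00.trans hs1.le, hs2⟩, hge⟩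
      exact absurd (le_csSup hbdd hsA) (not_le.mpr hs1)
    have ht0t' : t0 < t := by
      rcases lt_or_eq_of_le ht0t with h | h
      · exact h
      · rw [h] at hSct0; linarith
    have hint : ∫ s in t0..t, g2 s = 0 := by
      rw [intervalIntegral.integral_congr_ae (g := fun _ => (0:ℝ))
        (ae_of_all _ ?_), intervalIntegral.integral_zero]
      intro s hs
      rw [uIoc_of_le ht0t'.le] at hs
      have hz : Ic s < 0 := hlt s hs.1 hs.2
      simp [hg2def, cl_of_neg hz]
    have hdiff : Ic t - Ic t0 = ∫ s in t0..t, g2 s := by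
      rw [hIeq t, hIeq t0, hτid t ht, hτid t0 ⟨ht00, ht0t.trans ht.2⟩,
        ← intervalIntegral.integral_add_adjacent_intervals (hiig2 0 t0) (hiig2 t0 t)]
      ring
    rw [hint] at hdiff
    linarith
  have hsum : ∀ t ∈ Icc (0:ℝ) T, Sc t + Ic t ≤ M := by
    intro t ht
    have hnn : 0 ≤ ∫ s in (0:ℝ)..t, (g1 s - g2 s) := by
      refine intervalIntegral.integral_nonneg ht.1 (fun s _ => ?_)
      have he : g1 s - g2 s = ρ s * max 0 (min (Sc s) M) + γ * max 0 (min (Ic s) M) := by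
        simp only [hg1def, hg2def]; ring
      rw [he]
      exact add_nonneg (mul_nonneg (hρ s).1 (cl_nonneg _ _)) (mul_nonneg hγ (cl_nonneg _ _))
    rw [intervalIntegral.integral_sub (hiig1 0 t) (hiig2 0 t)] at hnn
    have h1 := hSeq t
    have h2 := hIeq t
    rw [hτid t ht] at h1 h2
    rw [hMdef]
    linarith
  have hSle : ∀ t ∈ Icc (0:ℝ) T, Sc t ≤ M := fun t ht => by
    have := hsum t ht; have := hInn t ht; linarith
  have hIle : ∀ t ∈ Icc (0:ℝ) T, Ic t ≤ M := fun t ht => by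
    have := hsum t ht; have := hSnn t ht; linarith
  have hSeq' : ∀ t ∈ Icc (0:ℝ) T, Sc t = x - ∫ s in (0:ℝ)..t, (β * Sc s * Ic s + ρ s * Sc s) := by
    intro t ht
    rw [hSeq t, hτid t ht]
    congr 1
    apply intervalIntegral.integral_congr
    intro s hs
    rw [uIcc_of_le ht.1] at hs
    have hsT : s ∈ Icc (0:ℝ) T := ⟨hs.1, hs.2.trans ht.2⟩
    simp only [hg1def]
    rw [cl_eq (hSnn s hsT) (hSle s hsT), cl_eq (hInn s hsT) (hIle s hsT)]
  have hIeq' : ∀ t ∈ Icc (0:ℝ) T, Ic t = y + ∫ s in (0:ℝ)..t, (β * Sc s * Ic s - γ * Ic s) := by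
    intro t ht
    rw [hIeq t, hτid t ht]
    congr 1
    apply intervalIntegral.integral_congr
    intro s hs
    rw [uIcc_of_le ht.1] at hs
    have hsT : s ∈ Icc (0:ℝ) T := ⟨hs.1, hs.2.trans ht.2⟩
    simp only [hg2def]
    rw [cl_eq (hSnn s hsT) (hSle s hsT), cl_eq (hInn s hsT) (hIle s hsT)]
  have hmono : ∀ t1 ∈ Icc (0:ℝ) T, ∀ t2 ∈ Icc (0:ℝ) T, t1 ≤ t2 → Sc t2 ≤ Sc t1 := by
    intro t1 h1 t2 h2 h12
    have hnn : 0 ≤ ∫ s in t1..t2, g1 s := by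
      refine intervalIntegral.integral_nonneg h12 (fun s _ => ?_)
      simp only [hg1def]
      exact add_nonneg (mul_nonneg (mul_nonneg hβ (cl_nonneg _ _)) (cl_nonneg _ _))
        (mul_nonneg (hρ s).1 (cl_nonneg _ _))
    have hdiff : Sc t2 - Sc t1 = -∫ s in t1..t2, g1 s := by
      rw [hSeq t2, hSeq t1, hτid t2 h2, hτid t1 h1,
        ← intervalIntegral.integral_add_adjacent_intervals (hiig1 0 t1) (hiig1 t1 t2)]
      ring
    linarith
  exact ⟨Sc, Ic, hScc, hIcc, hSeq', hIeq',
    fun t ht => ⟨hSnn t ht, hSle t ht, hInn t ht, hIle t ht⟩, hmono⟩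

end SIRaux

set_option maxHeartbeats 1000000 in
/-- Existence, uniqueness (on `[0,∞)`) and basic properties of the
solution of the controlled SIR system. -/
theorem controlled_SIR_existence_uniqueness
    (β γ : ℝ) (hβ : 0 < β) (hγ : 0 < γ)
    (r : ℝ → ℝ) (hr : Admissible r)
    (x y : ℝ) (hx : 0 ≤ x) (hy : 0 ≤ y) :
    ∃ S I : ℝ → ℝ,
      IsSIRSol β γ r x y S I ∧
      (∀ S' I' : ℝ → ℝ, IsSIRSol β γ r x y S' I' →
        ∀ t : ℝ, 0 ≤ t → S' t = S t ∧ I' t = I t) ∧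
      (∀ t : ℝ, 0 ≤ t → 0 ≤ S t ∧ S t ≤ x + y ∧ 0 ≤ I t ∧ I t ≤ x + y) ∧
      AntitoneOn S (Ici 0) ∧
      (∃ K : NNReal, LipschitzOnWith K S (Ici 0)) ∧
      (∃ K : NNReal, LipschitzOnWith K I (Ici 0)) ∧
      (∃ (I' : ℝ → ℝ) (K : NNReal),
        (∀ t ∈ Ici (0:ℝ), HasDerivWithinAt I (I' t) (Ici 0) t) ∧
        LipschitzOnWith K I' (Ici 0)) := by
  obtain ⟨hrm, hrb⟩ := hr
  set M : ℝ := x + y with hMdef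
  have hM : 0 ≤ M := by positivity
  -- the clamped control
  set ρ : ℝ → ℝ := fun t => max 0 (min (r t) 1) with hρdef
  have hρm : Measurable ρ := measurable_const.max (hrm.min measurable_const)
  have hρbd : ∀ t, 0 ≤ ρ t ∧ ρ t ≤ 1 :=
    fun t => ⟨le_max_left _ _, max_le zero_le_one (min_le_right _ _)⟩
  have hρae1 : ∀ᵐ s : ℝ ∂volume, 0 ≤ s → |ρ s| ≤ 1 :=
    ae_of_all _ fun s _ => abs_le.mpr ⟨by linarith [(hρbd s).1], (hρbd s).2⟩
  have hrae1 : ∀ᵐ s : ℝ ∂volume, 0 ≤ s → |r s| ≤ 1 := by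
    filter_upwards [hrb] with s hs h0
    exact abs_le.mpr ⟨by linarith [(hs h0).1], (hs h0).2⟩
  have hae : ∀ᵐ s : ℝ ∂volume, 0 ≤ s → r s = ρ s := by
    filter_upwards [hrb] with s hs h0
    simp only [hρdef]
    rw [min_eq_left (hs h0).2, max_eq_right (hs h0).1]
  -- solutions on [0, n] for each n
  choose Sn In hSc hIc hSeqn hIeqn hbdn hmonon using
    fun n : ℕ => SIRaux.exists_sol β γ hβ.le hγ.le ρ hρm hρbd x y hx hy n (Nat.cast_nonneg n)
  have agree : ∀ (n m : ℕ) (t : ℝ), t ∈ Icc (0:ℝ) (n:ℝ) → t ∈ Icc (0:ℝ) (m:ℝ) →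
      Sn n t = Sn m t ∧ In n t = In m t := by
    intro n m t h1 h2
    have hsub : Icc (0:ℝ) (min (n:ℝ) m) ⊆ Icc (0:ℝ) n :=
      Icc_subset_Icc le_rfl (min_le_left _ _)
    have hsub' : Icc (0:ℝ) (min (n:ℝ) m) ⊆ Icc (0:ℝ) m :=
      Icc_subset_Icc le_rfl (min_le_right _ _)
    exact SIRaux.unique hβ.le hγ.le hρm hρae1 (hSc n) (hIc n) (hSc m) (hIc m)
      (fun u hu => hSeqn n u (hsub hu)) (fun u hu => hIeqn n u (hsub hu))
      (fun u hu => hSeqn m u (hsub' hu)) (fun u hu => hIeqn m u (hsub' hu))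
      t ⟨h1.1, le_min h1.2 h2.2⟩
  set N : ℝ → ℕ := fun t => ⌊t⌋₊ + 1 with hNdef
  have hN : ∀ t : ℝ, t ≤ (N t : ℝ) := by
    intro t
    have := Nat.lt_floor_add_one t
    push_cast [hNdef]
    push_cast at this
    linarith
  set Sg : ℝ → ℝ := fun t => Sn (N (max t 0)) (max t 0) with hSgdef
  set Ig : ℝ → ℝ := fun t => In (N (max t 0)) (max t 0) with hIgdef
  have hagree : ∀ (n : ℕ) (s : ℝ), 0 ≤ s → s ≤ (n:ℝ) → Sg s = Sn n s ∧ Ig s = In n s := by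
    intro n s h0 hn
    have hm : max s 0 = s := max_eq_left h0
    simp only [hSgdef, hIgdef, hm]
    exact agree (N s) n s ⟨h0, hN s⟩ ⟨h0, hn⟩
  -- global continuity
  have hcont : ∀ G : ℕ → ℝ → ℝ, (∀ n, Continuous (G n)) →
      (∀ (n m : ℕ) (t : ℝ), t ∈ Icc (0:ℝ) (n:ℝ) → t ∈ Icc (0:ℝ) (m:ℝ) → G n t = G m t) →
      Continuous (fun t => G (N (max t 0)) (max t 0)) := by
    intro G hGc hGagree
    rw [continuous_iff_continuousAt]
    intro t
    set n : ℕ := ⌊max t 0⌋₊ + 2 with hndef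
    have htn : t < (n:ℝ) := by
      have h1 : max t 0 < ⌊max t 0⌋₊ + 1 := Nat.lt_floor_add_one _
      have h2 : t ≤ max t 0 := le_max_left _ _
      push_cast [hndef]
      linarith
    have heq : EqOn (fun t => G (N (max t 0)) (max t 0)) (fun t => G n (max t 0)) (Iio (n:ℝ)) := by
      intro u hu
      simp only
      have h0 : 0 ≤ max u 0 := le_max_right _ _
      have hun : max u 0 ≤ (n:ℝ) := by
        rcases le_total u 0 with h | h
        · rw [max_eq_right h]; positivity
        · rw [max_eq_left h]; exact (lt_of_lt_of_le (mem_Iio.mp hu) le_rfl).le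
      exact hGagree (N (max u 0)) n (max u 0) ⟨h0, hN _⟩ ⟨h0, hun⟩
    have hcn : ContinuousAt (fun t => G n (max t 0)) t :=
      ((hGc n).comp (continuous_id.max continuous_const)).continuousAt
    exact hcn.congr (eventuallyEq_of_mem (Iio_mem_nhds htn) fun u hu => (heq hu).symm)
  have hSgc : Continuous Sg :=
    hcont Sn hSc (fun n m t h1 h2 => (agree n m t h1 h2).1)
  have hIgc : Continuous Ig :=
    hcont In hIc (fun n m t h1 h2 => (agree n m t h1 h2).2)
  -- integral equations with ρ
  have hSg_eqρ : ∀ t : ℝ, 0 ≤ t →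
      Sg t = x - ∫ s in (0:ℝ)..t, (β * Sg s * Ig s + ρ s * Sg s) := by
    intro t h0
    set n : ℕ := N t with hndef
    have htn : t ≤ (n:ℝ) := hN t
    have h1 := (hagree n t h0 htn).1
    rw [h1, hSeqn n t ⟨h0, htn⟩]
    congr 1
    apply intervalIntegral.integral_congr
    intro s hs
    rw [uIcc_of_le h0] at hs
    have hs0 : 0 ≤ s := hs.1
    have hsn : s ≤ (n:ℝ) := hs.2.trans htn
    show β * Sn n s * In n s + ρ s * Sn n s = β * Sg s * Ig s + ρ s * Sg s
    rw [(hagree n s hs0 hsn).1, (hagree n s hs0 hsn).2]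
  have hIg_eq : ∀ t : ℝ, 0 ≤ t →
      Ig t = y + ∫ s in (0:ℝ)..t, (β * Sg s * Ig s - γ * Ig s) := by
    intro t h0
    set n : ℕ := N t with hndef
    have htn : t ≤ (n:ℝ) := hN t
    have h1 := (hagree n t h0 htn).2
    rw [h1, hIeqn n t ⟨h0, htn⟩]
    congr 1
    apply intervalIntegral.integral_congr
    intro s hs
    rw [uIcc_of_le h0] at hs
    have hs0 : 0 ≤ s := hs.1
    have hsn : s ≤ (n:ℝ) := hs.2.trans htn
    show β * Sn n s * In n s - γ * In n s = β * Sg s * Ig s - γ * Ig s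
    rw [(hagree n s hs0 hsn).1, (hagree n s hs0 hsn).2]
  -- integral equations with r
  have hSg_eqr : ∀ t : ℝ, 0 ≤ t →
      Sg t = x - ∫ s in (0:ℝ)..t, (β * Sg s * Ig s + r s * Sg s) := by
    intro t h0
    rw [hSg_eqρ t h0]
    congr 1
    apply intervalIntegral.integral_congr_ae
    filter_upwards [hae] with s hs hmem
    rw [uIoc_of_le h0] at hmem
    rw [hs hmem.1.le]
  -- bounds
  have hbdg : ∀ t : ℝ, 0 ≤ t → 0 ≤ Sg t ∧ Sg t ≤ x + y ∧ 0 ≤ Ig t ∧ Ig t ≤ x + y := by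
    intro t h0
    have h1 := hagree (N t) t h0 (hN t)
    rw [h1.1, h1.2]
    exact hbdn (N t) t ⟨h0, hN t⟩
  -- antitone
  have hmonog : AntitoneOn Sg (Ici 0) := by
    intro t1 h1 t2 h2 h12
    set n : ℕ := N t2 with hndef
    have h2n : t2 ≤ (n:ℝ) := hN t2
    have h1n : t1 ≤ (n:ℝ) := h12.trans h2n
    rw [(hagree n t1 h1 h1n).1, (hagree n t2 h2 h2n).1]
    exact hmonon n t1 ⟨h1, h1n⟩ t2 ⟨h2, h2n⟩ h12
  -- abs bounds
  have haS : ∀ s : ℝ, 0 ≤ s → |Sg s| ≤ x + y := by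
    intro s hs
    obtain ⟨a1, a2, _, _⟩ := hbdg s hs
    exact abs_le.mpr ⟨by linarith, a2⟩
  have haI : ∀ s : ℝ, 0 ≤ s → |Ig s| ≤ x + y := by
    intro s hs
    obtain ⟨_, _, a3, a4⟩ := hbdg s hs
    exact abs_le.mpr ⟨by linarith, a4⟩
  -- Lipschitz for S
  set K1 : ℝ := β * (x + y) * (x + y) + (x + y) with hK1def
  have hK1nn : 0 ≤ K1 := by positivity
  have hiiS : ∀ a : ℝ, 0 ≤ a →
      IntervalIntegrable (fun s => β * Sg s * Ig s + ρ s * Sg s) volume 0 a :=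
    fun a ha => (((continuous_const.mul hSgc).mul hIgc).intervalIntegrable _ _).add
      (SIRaux.ii_mul hρm hρae1 hSgc ha)
  have hdiffS : ∀ u t : ℝ, 0 ≤ u → 0 ≤ t →
      Sg t - Sg u = -∫ s in u..t, (β * Sg s * Ig s + ρ s * Sg s) := by
    intro u t hu ht
    rw [hSg_eqρ t ht, hSg_eqρ u hu,
      ← intervalIntegral.integral_add_adjacent_intervals (hiiS u hu)
        ((hiiS u hu).symm.trans (hiiS t ht))]
    ring
  have hlipS' : ∀ t u : ℝ, 0 ≤ t → 0 ≤ u → |Sg t - Sg u| ≤ K1 * |t - u| := by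
    intro t u ht hu
    have hcalc : |Sg t - Sg u| = |∫ s in u..t, (β * Sg s * Ig s + ρ s * Sg s)| := by
      rw [hdiffS u t hu ht, abs_neg]
    rw [hcalc]
    have := intervalIntegral.norm_integral_le_of_norm_le_const
      (C := K1) (f := fun s => β * Sg s * Ig s + ρ s * Sg s) (a := u) (b := t) ?_
    · simpa [Real.norm_eq_abs] using this
    · intro s hs
      have hs' : min u t < s ∧ s ≤ max u t := hs
      have hs0 : 0 ≤ s := (le_min hu ht).trans hs'.1.le
      obtain ⟨b1, b2, b3, b4⟩ := hbdg s hs0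
      have hρ1 := (hρbd s).1
      have hρ2 := (hρbd s).2
      rw [Real.norm_eq_abs, abs_of_nonneg (by positivity)]
      have m1 : Sg s * Ig s ≤ (x + y) * (x + y) := mul_le_mul b2 b4 b3 (by positivity)
      have m2 : ρ s * Sg s ≤ 1 * (x + y) := mul_le_mul hρ2 b2 b1 zero_le_one
      show β * Sg s * Ig s + ρ s * Sg s ≤ β * (x + y) * (x + y) + (x + y)
      nlinarith [mul_le_mul_of_nonneg_left m1 hβ.le]
  have hlipS : LipschitzOnWith (Real.toNNReal K1) Sg (Ici 0) := by
    rw [lipschitzOnWith_iff_dist_le_mul]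
    intro t ht u hu
    rw [Real.dist_eq, Real.dist_eq, Real.coe_toNNReal _ hK1nn]
    exact hlipS' t u ht hu
  -- Lipschitz for I
  set K2 : ℝ := β * (x + y) * (x + y) + γ * (x + y) with hK2def
  have hK2nn : 0 ≤ K2 := by positivity
  set g : ℝ → ℝ := fun s => β * Sg s * Ig s - γ * Ig s with hgdef
  have hgc : Continuous g := ((continuous_const.mul hSgc).mul hIgc).sub (continuous_const.mul hIgc)
  have hdiffI : ∀ u t : ℝ, 0 ≤ u → 0 ≤ t → Ig t - Ig u = ∫ s in u..t, g s := by
    intro u t hu ht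
    rw [hIg_eq t ht, hIg_eq u hu,
      ← intervalIntegral.integral_add_adjacent_intervals (hgc.intervalIntegrable 0 u)
        (hgc.intervalIntegrable u t)]
    ring
  have hlipI' : ∀ t u : ℝ, 0 ≤ t → 0 ≤ u → |Ig t - Ig u| ≤ K2 * |t - u| := by
    intro t u ht hu
    rw [hdiffI u t hu ht]
    have := intervalIntegral.norm_integral_le_of_norm_le_const
      (C := K2) (f := g) (a := u) (b := t) ?_
    · simpa [Real.norm_eq_abs] using this
    · intro s hs
      have hs' : min u t < s ∧ s ≤ max u t := hs
      have hs0 : 0 ≤ s := (le_min hu ht).trans hs'.1.le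
      obtain ⟨b1, b2, b3, b4⟩ := hbdg s hs0
      rw [Real.norm_eq_abs]
      have m1 : Sg s * Ig s ≤ (x + y) * (x + y) := mul_le_mul b2 b4 b3 (by positivity)
      have e1 : g s = β * Sg s * Ig s - γ * Ig s := rfl
      rw [e1, hK2def]
      refine (abs_sub _ _).trans ?_
      rw [abs_of_nonneg (mul_nonneg (mul_nonneg hβ.le b1) b3),
        abs_of_nonneg (mul_nonneg hγ.le b3)]
      nlinarith [mul_le_mul_of_nonneg_left m1 hβ.le, mul_le_mul_of_nonneg_left b4 hγ.le]
  have hlipI : LipschitzOnWith (Real.toNNReal K2) Ig (Ici 0) := by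
    rw [lipschitzOnWith_iff_dist_le_mul]
    intro t ht u hu
    rw [Real.dist_eq, Real.dist_eq, Real.coe_toNNReal _ hK2nn]
    exact hlipI' t u ht hu
  -- derivative of I
  have hJ : ∀ t : ℝ, HasDerivAt (fun u => y + ∫ s in (0:ℝ)..u, g s) (g t) t := fun t =>
    (intervalIntegral.integral_hasDerivAt_right (hgc.intervalIntegrable _ _)
      (hgc.stronglyMeasurableAtFilter _ _) hgc.continuousAt).const_add y
  have hderiv : ∀ t ∈ Ici (0:ℝ), HasDerivWithinAt Ig (g t) (Ici 0) t := by
    intro t ht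
    refine ((hJ t).hasDerivWithinAt).congr ?_ ?_
    · intro u hu
      exact hIg_eq u hu
    · exact hIg_eq t ht
  -- Lipschitz of the derivative
  set K3 : ℝ := β * ((x + y) * K2 + (x + y) * K1) + γ * K2 with hK3def
  have hK3nn : 0 ≤ K3 := by positivity
  have hlipg' : ∀ t u : ℝ, 0 ≤ t → 0 ≤ u → |g t - g u| ≤ K3 * |t - u| := by
    intro t u ht hu
    have hp := SIRaux.prod_diff_abs (Sg t) (Ig t) (Sg u) (Ig u)
    have e : g t - g u = β * (Sg t * Ig t - Sg u * Ig u) - γ * (Ig t - Ig u) := by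
      simp only [hgdef]; ring
    have step1 : |g t - g u| ≤ β * |Sg t * Ig t - Sg u * Ig u| + γ * |Ig t - Ig u| := by
      rw [e]
      refine (abs_sub _ _).trans ?_
      rw [abs_mul, abs_mul, abs_of_nonneg hβ.le, abs_of_nonneg hγ.le]
    refine step1.trans ?_
    have m1 : |Sg t| * |Ig t - Ig u| ≤ (x + y) * (K2 * |t - u|) :=
      mul_le_mul (haS t ht) (hlipI' t u ht hu) (abs_nonneg _) (by positivity)
    have m2 : |Ig u| * |Sg t - Sg u| ≤ (x + y) * (K1 * |t - u|) :=
      mul_le_mul (haI u hu) (hlipS' t u ht hu) (abs_nonneg _) (by positivity)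
    rw [hK3def]
    calc β * |Sg t * Ig t - Sg u * Ig u| + γ * |Ig t - Ig u|
        ≤ β * ((x + y) * (K2 * |t - u|) + (x + y) * (K1 * |t - u|)) + γ * (K2 * |t - u|) :=
          add_le_add (mul_le_mul_of_nonneg_left (hp.trans (add_le_add m1 m2)) hβ.le)
            (mul_le_mul_of_nonneg_left (hlipI' t u ht hu) hγ.le)
      _ = (β * ((x + y) * K2 + (x + y) * K1) + γ * K2) * |t - u| := by ring
  have hlipg : LipschitzOnWith (Real.toNNReal K3) g (Ici 0) := by
    rw [lipschitzOnWith_iff_dist_le_mul]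
    intro t ht u hu
    rw [Real.dist_eq, Real.dist_eq, Real.coe_toNNReal _ hK3nn]
    exact hlipg' t u ht hu
  -- uniqueness
  have huniq : ∀ S' I' : ℝ → ℝ, IsSIRSol β γ r x y S' I' →
      ∀ t : ℝ, 0 ≤ t → S' t = Sg t ∧ I' t = Ig t := by
    intro S' I' hsol t ht
    obtain ⟨hS'c, hI'c, hS'eq, hI'eq⟩ := hsol
    set S1 : ℝ → ℝ := fun u => S' (max u 0) with hS1def
    set I1 : ℝ → ℝ := fun u => I' (max u 0) with hI1def
    have hS1c : Continuous S1 :=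
      hS'c.comp_continuous (continuous_id.max continuous_const)
        (fun u => mem_Ici.mpr (le_max_right u 0))
    have hI1c : Continuous I1 :=
      hI'c.comp_continuous (continuous_id.max continuous_const)
        (fun u => mem_Ici.mpr (le_max_right u 0))
    have he1 : ∀ u ∈ Icc (0:ℝ) t, S1 u = x - ∫ s in (0:ℝ)..u, (β * S1 s * I1 s + r s * S1 s) := by
      intro u hu
      have hmu : max u 0 = u := max_eq_left hu.1
      show S' (max u 0) = _
      rw [hmu, hS'eq u hu.1]
      congr 1
      apply intervalIntegral.integral_congr
      intro s hsm
      rw [uIcc_of_le hu.1] at hsm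
      have hms : max s 0 = s := max_eq_left hsm.1
      show β * S' s * I' s + r s * S' s = β * S1 s * I1 s + r s * S1 s
      simp only [hS1def, hI1def, hms]
    have hf1 : ∀ u ∈ Icc (0:ℝ) t, I1 u = y + ∫ s in (0:ℝ)..u, (β * S1 s * I1 s - γ * I1 s) := by
      intro u hu
      have hmu : max u 0 = u := max_eq_left hu.1
      show I' (max u 0) = _
      rw [hmu, hI'eq u hu.1]
      congr 1
      apply intervalIntegral.integral_congr
      intro s hsm
      rw [uIcc_of_le hu.1] at hsm
      have hms : max s 0 = s := max_eq_left hsm.1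
      show β * S' s * I' s - γ * I' s = β * S1 s * I1 s - γ * I1 s
      simp only [hS1def, hI1def, hms]
    have he2 : ∀ u ∈ Icc (0:ℝ) t, Sg u = x - ∫ s in (0:ℝ)..u, (β * Sg s * Ig s + r s * Sg s) :=
      fun u hu => hSg_eqr u hu.1
    have hf2 : ∀ u ∈ Icc (0:ℝ) t, Ig u = y + ∫ s in (0:ℝ)..u, (β * Sg s * Ig s - γ * Ig s) :=
      fun u hu => hIg_eq u hu.1
    have hres := SIRaux.unique hβ.le hγ.le hrm hrae1 hS1c hI1c hSgc hIgc he1 hf1 he2 hf2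
      t (right_mem_Icc.mpr ht)
    have hmt : max t 0 = t := max_eq_left ht
    constructor
    · have h := hres.1
      rw [show S1 t = S' t by simp only [hS1def, hmt]] at h
      exact h
    · have h := hres.2
      rw [show I1 t = I' t by simp only [hI1def, hmt]] at h
      exact h
  exact ⟨Sg, Ig, ⟨hSgc.continuousOn, hIgc.continuousOn, hSg_eqr, hIg_eq⟩, huniq, hbdg, hmonog,
    ⟨Real.toNNReal K1, hlipS⟩, ⟨Real.toNNReal K2, hlipI⟩,
    ⟨g, Real.toNNReal K3, hderiv, hlipg⟩⟩
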